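/- In an inverted forest (all summits are self-loops), summits distribute over disjoint union with subtraction: if summits (γ₁ ⊕ γ₂) ⊆ loops (γ₁ ⊕ γ₂), then summits (γ₁ ⊕ γ₂) = (summits γ₁ \ nodes γ₂) ∪ (summits γ₂ \ nodes γ₁). -/
import Mathlib


open scoped Classical

/-- A partial graph of type `T`: a finite partial map from nodes (natural
numbers, undefined on `0 = null`) to pairs of a value and an adjacency list. -/
structure PGraph (T : Type) where
  f : ℕ → Option (T × List ℕ)
  dom : Finset ℕ
  mem_dom : ∀ x, x ∈ dom ↔ (f x).isSome
  null_not_mem : f 0 = none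

namespace PGraph

variable {T T' : Type}

def empty : PGraph T :=
  ⟨fun _ => none, ∅, by intro x; simp, rfl⟩

/-- Total (left-biased) union; meaningful when domains are disjoint. -/
def union (γ₁ γ₂ : PGraph T) : PGraph T where
  f := fun x => match γ₁.f x with
    | some v => some v
    | none => γ₂.f x
  dom := γ₁.dom ∪ γ₂.dom
  mem_dom := by
    intro x
    rw [Finset.mem_union, γ₁.mem_dom, γ₂.mem_dom]
    cases h : γ₁.f x <;> simp [h]
  null_not_mem := by simp [γ₁.null_not_mem, γ₂.null_not_mem]

/-- The partial PCM join: defined iff the domains are disjoint. -/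
noncomputable def join (γ₁ γ₂ : PGraph T) : Option (PGraph T) :=
  if Disjoint γ₁.dom γ₂.dom then some (union γ₁ γ₂) else none

/-- Filter (restriction) of a graph to a set of nodes. -/
noncomputable def restrict (γ : PGraph T) (S : Set ℕ) : PGraph T where
  f := fun x => if x ∈ S then γ.f x else none
  dom := γ.dom.filter (fun x => x ∈ S)
  mem_dom := by
    intro x
    rw [Finset.mem_filter, γ.mem_dom]
    by_cases h : x ∈ S <;> simp [h]
  null_not_mem := by simp [γ.null_not_mem]

/-- Map combinator: apply `g` pointwise at each node. -/
def mapNode (g : ℕ → T × List ℕ → T' × List ℕ) (γ : PGraph T) : PGraph T' where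
  f := fun x => (γ.f x).map (g x)
  dom := γ.dom
  mem_dom := by intro x; rw [γ.mem_dom]; cases h : γ.f x <;> simp [h]
  null_not_mem := by simp [γ.null_not_mem]

/-- Erasure: replace every value with the unit value, keeping adjacency. -/
def erasure (γ : PGraph T) : PGraph Unit :=
  mapNode (fun _ p => ((), p.2)) γ

/-- Adjacency list of a node. -/
def adj (γ : PGraph T) (x : ℕ) : List ℕ :=
  ((γ.f x).map Prod.snd).getD []

/-- The value stored at a node, if any. -/
def val? (γ : PGraph T) (x : ℕ) : Option T :=
  (γ.f x).map Prod.fst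

/-- Sinks: nodes appearing in some adjacency list. -/
def sinks (γ : PGraph T) : Set ℕ :=
  ⋃ x ∈ γ.dom, {y | y ∈ γ.adj x}

/-- A graph is closed if it has no dangling edges. -/
def Closed (γ : PGraph T) : Prop :=
  sinks γ ⊆ insert 0 (↑γ.dom : Set ℕ)

/-- Remove a node (and its outgoing edges) from the graph. -/
def erase (γ : PGraph T) (y : ℕ) : PGraph T where
  f := fun x => if x = y then none else γ.f x
  dom := γ.dom.erase y
  mem_dom := by
    intro x
    rw [Finset.mem_erase, γ.mem_dom]
    by_cases h : x = y <;> simp [h]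
  null_not_mem := by
    by_cases h : (0 : ℕ) = y <;> simp [h, γ.null_not_mem]

/-- Set of nodes reachable from `x` in `γ`. -/
def reach (γ : PGraph T) (x : ℕ) : Set ℕ :=
  if h : x ∈ γ.dom then
    {x} ∪ ⋃ y ∈ γ.adj x, reach (γ.erase x) y
  else ∅
termination_by γ.dom.card
decreasing_by simpa [PGraph.erase] using Finset.card_erase_lt_of_mem h

/-- Summits of a path starting at `x`. -/
def summit (γ : PGraph T) (x : ℕ) : Set ℕ :=
  if h : x ∈ γ.dom then ⋃ y ∈ γ.adj x, summit (γ.erase x) y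
  else {x}
termination_by γ.dom.card
decreasing_by simpa [PGraph.erase] using Finset.card_erase_lt_of_mem h

/-- All summits of a graph. -/
def summits (γ : PGraph T) : Set ℕ :=
  ⋃ x ∈ γ.dom, summit γ x

/-- Nodes that lie on a cycle (reachable from one of their own children). -/
def cycles (γ : PGraph T) : Set ℕ :=
  {x | x ∈ ⋃ y ∈ γ.adj x, reach γ y}

/-- Targets of dangling edges. -/
def dangls (γ : PGraph T) : Set ℕ :=
  sinks γ \ ↑γ.dom

/-- Nodes forming cycles of size one. -/
def loops (γ : PGraph T) : Set ℕ :=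
  {x | x ∈ γ.dom ∧ x ∈ γ.adj x}

/-- Filter by contents: keep nodes whose value lies in `V`. -/
noncomputable def filterVal (γ : PGraph T) (V : Set T) : PGraph T :=
  γ.restrict {x | ∃ v ∈ V, γ.val? x = some v}

/-- Update the entry at node `x` (if present). -/
def update (γ : PGraph T) (x : ℕ) (p : T × List ℕ) : PGraph T where
  f := fun y => if y = x then (γ.f y).map (fun _ => p) else γ.f y
  dom := γ.dom
  mem_dom := by
    intro y
    rw [γ.mem_dom]
    by_cases h : y = x
    · subst h; cases hf : γ.f y <;> simp [hf]
    · simp [h]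
  null_not_mem := by
    by_cases h : (0 : ℕ) = x
    · subst h; simp [γ.null_not_mem]
    · simp [h, γ.null_not_mem]

/-- Binary graphs: every adjacency list has exactly two elements. -/
def Binary (γ : PGraph T) : Prop :=
  ∀ x p, γ.f x = some p → p.2.length = 2

/-- Marks of the Schorr-Waite algorithm. -/
inductive Mark | O | L | R | X
deriving DecidableEq

/-- The `if-mark` transformation on a node's mark and children. -/
def ifMark (f : ℕ → ℕ) (x : ℕ) : Mark × List ℕ → Unit × List ℕ
  | (Mark.L, [_, r]) => ((), [f x, r])
  | (Mark.R, [l, _]) => ((), [l, f x])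
  | (_, l) => ((), l)

end PGraph

namespace PGraph

variable {T : Type}

lemma ext' {γ γ' : PGraph T} (hf : γ.f = γ'.f) : γ = γ' := by
  have hdom : γ.dom = γ'.dom :=
    Finset.ext fun x => by rw [γ.mem_dom, γ'.mem_dom, hf]
  cases γ; cases γ'
  cases hf; cases hdom; rfl

lemma f_eq_none_of_not_mem {γ : PGraph T} {x : ℕ} (h : x ∉ γ.dom) :
    γ.f x = none := by
  rw [γ.mem_dom] at h
  exact Option.not_isSome_iff_eq_none.mp h

lemma erase_union (γ₁ γ₂ : PGraph T) (x : ℕ) :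
    (γ₁.union γ₂).erase x = (γ₁.erase x).union (γ₂.erase x) := by
  apply ext'
  funext y
  by_cases h : y = x <;> simp [erase, union, h]

lemma erase_eq_self {γ : PGraph T} {x : ℕ} (h : x ∉ γ.dom) :
    γ.erase x = γ := by
  apply ext'
  funext y
  by_cases hy : y = x
  · subst hy; simp [erase, f_eq_none_of_not_mem h]
  · simp [erase, hy]

lemma union_comm {γ₁ γ₂ : PGraph T} (hd : Disjoint γ₁.dom γ₂.dom) :
    γ₁.union γ₂ = γ₂.union γ₁ := by
  apply ext'
  funext x
  cases h1 : γ₁.f x with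
  | none => cases h2 : γ₂.f x <;> simp [union, h1, h2]
  | some v =>
    have hx1 : x ∈ γ₁.dom := by rw [γ₁.mem_dom, h1]; rfl
    have hx2 : x ∉ γ₂.dom := fun hx2 => (Finset.disjoint_left.mp hd hx1) hx2
    simp [union, h1, f_eq_none_of_not_mem hx2]

lemma dom_union (γ₁ γ₂ : PGraph T) : (γ₁.union γ₂).dom = γ₁.dom ∪ γ₂.dom := rfl

lemma adj_union_left {γ₁ γ₂ : PGraph T} {x : ℕ} (h : x ∈ γ₁.dom) :
    (γ₁.union γ₂).adj x = γ₁.adj x := by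
  rw [γ₁.mem_dom] at h
  cases h1 : γ₁.f x with
  | none => rw [h1] at h; simp at h
  | some v => simp [adj, union, h1]

lemma summit_union_left (γ₂ : PGraph T) : ∀ n (γ₁ : PGraph T),
    γ₁.dom.card ≤ n → Disjoint γ₁.dom γ₂.dom → ∀ x z, z ∈ γ₁.summit x →
    z ∉ γ₂.dom → z ∈ (γ₁.union γ₂).summit x := by
  intro n
  induction n with
  | zero =>
    intro γ₁ hcard hd x z hz hz2
    have hx : x ∉ γ₁.dom := by
      intro hx
      have := Finset.card_pos.mpr ⟨x, hx⟩
      omega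
    rw [PGraph.summit, dif_neg hx] at hz
    have hzx : z = x := hz
    rw [hzx] at hz2 ⊢
    have hxu : x ∉ (γ₁.union γ₂).dom := by
      rw [dom_union, Finset.mem_union]
      rintro (h1 | h2)
      · exact hx h1
      · exact hz2 h2
    rw [PGraph.summit, dif_neg hxu]
    rfl
  | succ n ih =>
    intro γ₁ hcard hd x z hz hz2
    by_cases hx : x ∈ γ₁.dom
    · rw [PGraph.summit, dif_pos hx] at hz
      obtain ⟨y, hy, hzy⟩ := Set.mem_iUnion₂.mp hz
      have hxu : x ∈ (γ₁.union γ₂).dom := by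
        rw [dom_union]; exact Finset.mem_union_left _ hx
      rw [PGraph.summit, dif_pos hxu]
      refine Set.mem_iUnion₂.mpr ⟨y, ?_, ?_⟩
      · rwa [adj_union_left hx]
      · have hx2 : x ∉ γ₂.dom := Finset.disjoint_left.mp hd hx
        rw [erase_union, erase_eq_self hx2]
        refine ih (γ₁.erase x) ?_ ?_ y z hzy hz2
        · have : (γ₁.erase x).dom.card < γ₁.dom.card := by
            simpa [PGraph.erase] using Finset.card_erase_lt_of_mem hx
          omega
        · exact Finset.disjoint_of_subset_left (Finset.erase_subset _ _) hd
    · rw [PGraph.summit, dif_neg hx] at hz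
      have hzx : z = x := hz
      rw [hzx] at hz2 ⊢
      have hxu : x ∉ (γ₁.union γ₂).dom := by
        rw [dom_union, Finset.mem_union]
        rintro (h1 | h2)
        · exact hx h1
        · exact hz2 h2
      rw [PGraph.summit, dif_neg hxu]
      rfl

lemma self_mem_summit_of_loop {γ : PGraph T} {z : ℕ} (hdom : z ∈ γ.dom)
    (hadj : z ∈ γ.adj z) : z ∈ γ.summit z := by
  rw [PGraph.summit, dif_pos hdom]
  refine Set.mem_iUnion₂.mpr ⟨z, hadj, ?_⟩
  have hz : z ∉ (γ.erase z).dom := by simp [PGraph.erase]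
  rw [PGraph.summit, dif_neg hz]
  rfl

end PGraph

/-- In an inverted forest (all summits are self-loops), summits distribute
over disjoint union with subtraction. -/
theorem summits_union_of_loops (T : Type) (γ₁ γ₂ : PGraph T)
    (hd : Disjoint γ₁.dom γ₂.dom)
    (h : (PGraph.union γ₁ γ₂).summits ⊆ (PGraph.union γ₁ γ₂).loops) :
    (PGraph.union γ₁ γ₂).summits =
      (γ₁.summits \ ↑γ₂.dom) ∪ (γ₂.summits \ ↑γ₁.dom) := by
  ext z
  constructor
  · intro hz
    obtain ⟨hdom, hadj⟩ := h hz
    rw [PGraph.dom_union, Finset.mem_union] at hdom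
    rcases hdom with h1 | h2
    · have hz2 : z ∉ γ₂.dom := Finset.disjoint_left.mp hd h1
      rw [PGraph.adj_union_left h1] at hadj
      left
      exact ⟨Set.mem_biUnion h1 (PGraph.self_mem_summit_of_loop h1 hadj), hz2⟩
    · have hz1 : z ∉ γ₁.dom := Finset.disjoint_right.mp hd h2
      rw [PGraph.union_comm hd, PGraph.adj_union_left h2] at hadj
      right
      exact ⟨Set.mem_biUnion h2 (PGraph.self_mem_summit_of_loop h2 hadj), hz1⟩
  · rintro (⟨hz, hz2⟩ | ⟨hz, hz1⟩)
    · obtain ⟨x, hx, hzx⟩ := Set.mem_iUnion₂.mp hz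
      have : z ∈ (γ₁.union γ₂).summit x :=
        PGraph.summit_union_left γ₂ γ₁.dom.card γ₁ le_rfl hd x z hzx hz2
      exact Set.mem_biUnion (by rw [PGraph.dom_union]; exact Finset.mem_union_left _ hx) this
    · obtain ⟨x, hx, hzx⟩ := Set.mem_iUnion₂.mp hz
      rw [PGraph.union_comm hd]
      have : z ∈ (γ₂.union γ₁).summit x :=
        PGraph.summit_union_left γ₁ γ₂.dom.card γ₂ le_rfl hd.symm x z hzx hz1
      exact Set.mem_biUnion (by rw [PGraph.dom_union]; exact Finset.mem_union_left _ hx) this
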